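/- Let 1/4 < s ≤ 1/2, let 0 < ε < (4s−1)/6, and set σ = s − 1/2 − ε. Then there exists a constant C > 0 such that for every v : ℤ → ℂ and for each of the four choices of distinguished position b ∈ {n₁, n₂, n₃, n}, one has (with all sums taken in [0,∞]) Σ_{n∈ℤ} Σ_{(n₁,n₂,n₃)∈Γ(n)} (⟨n⟩^{2s} / |φ(n₁,n₂,n₃,n)|) · |v(n_b)|² · |v(n₁)| |v(n₂)| |v(n₃)| |v(n)| ≤ C · (Σ_{m∈ℤ} ⟨m⟩^{2σ} |v(m)|²)³. -/

import Mathlib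

open scoped ENNReal NNReal

/-- The index set `Γ(n) = {(n₁,n₂,n₃) ∈ ℤ³ : n = n₁ − n₂ + n₃, n₁ ≠ n, n₃ ≠ n}`. -/
def Gamma (n : ℤ) : Set (ℤ × ℤ × ℤ) :=
  {p | n = p.1 - p.2.1 + p.2.2 ∧ p.1 ≠ n ∧ p.2.2 ≠ n}

/-- The fourth-order resonance function `φ(n₁,n₂,n₃,n) = n₁⁴ − n₂⁴ + n₃⁴ − n⁴`. -/
def phi (p : ℤ × ℤ × ℤ) (n : ℤ) : ℤ := p.1 ^ 4 - p.2.1 ^ 4 + p.2.2 ^ 4 - n ^ 4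

/-- The Japanese bracket `⟨m⟩ = (1 + m²)^{1/2}`. -/
noncomputable def jap (m : ℤ) : ℝ := (1 + (m : ℝ) ^ 2) ^ ((1 : ℝ) / 2)

def Qz (n x y : ℤ) : ℤ := 6*n^2 + 6*n*(x+y) + 2*x^2 + 3*x*y + 2*y^2

lemma phi_eq (n x y : ℤ) : phi (n+x, n+x+y, n+y) n = -(2*x*y) * Qz n x y := by
  simp only [phi, Qz]; ring

lemma Qz_id (n x y : ℤ) : 6 * Qz n x y = (6*n+3*x+3*y)^2 + 3*x^2 + 3*y^2 := by
  simp only [Qz]; ring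

lemma Qz_ge_one {n x y : ℤ} (hx : x ≠ 0) : 1 ≤ Qz n x y := by
  have h1 : 1 ≤ x^2 := by rcases lt_or_gt_of_ne hx with h | h <;> nlinarith
  have h2 := Qz_id n x y
  nlinarith [sq_nonneg (6*n+3*x+3*y), sq_nonneg y]

lemma freq_bound {n x y : ℤ} (hx : x ≠ 0) (m : ℤ)
    (hm : m = n ∨ m = n + x ∨ m = n + y ∨ m = n + x + y) :
    (1:ℝ) + (m:ℝ)^2 ≤ 13 * (Qz n x y : ℝ) := by
  have hQ1 : (1:ℝ) ≤ (Qz n x y : ℝ) := by exact_mod_cast Qz_ge_one hx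
  have key : (m:ℝ)^2 ≤ 12 * (Qz n x y : ℝ) := by
    have hid : (6:ℝ) * (Qz n x y : ℝ) = (6*(n:ℝ)+3*(x:ℝ)+3*(y:ℝ))^2 + 3*(x:ℝ)^2 + 3*(y:ℝ)^2 := by
      exact_mod_cast congrArg (fun t : ℤ => (t:ℝ)) (Qz_id n x y)
    rcases hm with h | h | h | h <;> rw [h] <;> push_cast <;>
      nlinarith [sq_nonneg (6*(n:ℝ)+3*(x:ℝ)+3*(y:ℝ)), sq_nonneg ((x:ℝ)-(y:ℝ)),
        sq_nonneg ((x:ℝ)+(y:ℝ)), sq_nonneg (6*(n:ℝ)+3*(x:ℝ)+3*(y:ℝ) - 3*(x:ℝ)),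
        sq_nonneg (6*(n:ℝ)+3*(x:ℝ)+3*(y:ℝ) - 3*(y:ℝ)), sq_nonneg (x:ℝ), sq_nonneg (y:ℝ)]
  linarith

lemma one_add_sq_pos (m : ℤ) : (0:ℝ) < 1 + (m:ℝ)^2 := by positivity
lemma jap_pos (m : ℤ) : 0 < jap m := Real.rpow_pos_of_pos (one_add_sq_pos m) _
lemma jap_one_le (m : ℤ) : 1 ≤ jap m := by
  rw [jap]
  calc (1:ℝ) = 1 ^ ((1:ℝ)/2) := (Real.one_rpow _).symm
  _ ≤ _ := Real.rpow_le_rpow (by norm_num) (by nlinarith [sq_nonneg ((m:ℝ))]) (by norm_num)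
lemma jap_neg (m : ℤ) : jap (-m) = jap m := by simp [jap]

lemma jap_sq (m : ℤ) : jap m * jap m = 1 + (m:ℝ)^2 := by
  rw [jap, ← Real.rpow_add (one_add_sq_pos m)]; norm_num
lemma jap_le_of_sq_le {m : ℤ} {B : ℝ} (h : 1 + (m:ℝ)^2 ≤ B) :
    jap m ≤ B ^ ((1:ℝ)/2) :=
  Real.rpow_le_rpow (le_of_lt (one_add_sq_pos m)) h (by norm_num)

lemma jap_rpow_le {m : ℤ} {B r : ℝ} (hB : 0 ≤ B) (hr : 0 ≤ r)
    (h : 1 + (m:ℝ)^2 ≤ B) : jap m ^ r ≤ B ^ ((1/2) * r) := by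
  calc jap m ^ r ≤ (B ^ ((1:ℝ)/2)) ^ r :=
        Real.rpow_le_rpow (jap_pos m).le (jap_le_of_sq_le h) hr
  _ = B ^ ((1/2) * r) := (Real.rpow_mul hB _ _).symm

lemma jap_mul_jap_le {x y : ℤ} (hx : x ≠ 0) (hy : y ≠ 0) :
    jap x * jap y ≤ 2 * |(x:ℝ)| * |(y:ℝ)| := by
  have hx1 : (1:ℝ) ≤ (x:ℝ)^2 := by
    have : 1 ≤ x^2 := by rcases lt_or_gt_of_ne hx with h | h <;> nlinarith
    exact_mod_cast this
  have hy1 : (1:ℝ) ≤ (y:ℝ)^2 := by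
    have : 1 ≤ y^2 := by rcases lt_or_gt_of_ne hy with h | h <;> nlinarith
    exact_mod_cast this
  have h0 : 0 ≤ jap x * jap y := mul_nonneg (jap_pos x).le (jap_pos y).le
  have h1 : 0 ≤ 2 * |(x:ℝ)| * |(y:ℝ)| :=
    mul_nonneg (mul_nonneg (by norm_num) (abs_nonneg _)) (abs_nonneg _)
  have hsq : (jap x * jap y)^2 ≤ (2 * |(x:ℝ)| * |(y:ℝ)|)^2 := by
    have ex : jap x * jap x = 1 + (x:ℝ)^2 := jap_sq x
    have ey : jap y * jap y = 1 + (y:ℝ)^2 := jap_sq y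
    have : (jap x * jap y)^2 = (1+(x:ℝ)^2) * (1+(y:ℝ)^2) := by
      rw [← ex, ← ey]; ring
    rw [this]
    have h4 : (2 * |(x:ℝ)| * |(y:ℝ)|)^2 = 4 * (x:ℝ)^2 * (y:ℝ)^2 := by
      rw [mul_pow, mul_pow, sq_abs, sq_abs]; ring
    rw [h4]; nlinarith
  exact (pow_le_pow_iff_left₀ h0 h1 (by norm_num)).mp hsq

lemma master_real (s τ δ : ℝ) (hs : 0 ≤ s) (hτ : 0 ≤ τ) (hδ : 0 ≤ δ)
    (hsum : 2*s + 3*τ + δ = 2) {n x y : ℤ} (hx : x ≠ 0) (hy : y ≠ 0)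
    {w1 w2 w3 w4 : ℤ}
    (h1 : (1:ℝ)+(w1:ℝ)^2 ≤ 13*(Qz n x y:ℝ)) (h2 : (1:ℝ)+(w2:ℝ)^2 ≤ 13*(Qz n x y:ℝ))
    (h3 : (1:ℝ)+(w3:ℝ)^2 ≤ 13*(Qz n x y:ℝ)) (h4 : (1:ℝ)+(w4:ℝ)^2 ≤ 13*(Qz n x y:ℝ))
    (hn : (1:ℝ)+(n:ℝ)^2 ≤ 13*(Qz n x y:ℝ)) :
    jap n ^ (2*s) * jap w1 ^ τ * jap w2 ^ τ * jap w3 ^ τ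
      * (jap x * jap y * jap w4 ^ δ)
    ≤ 13 * |(phi (n+x, n+x+y, n+y) n : ℝ)| := by
  set Q : ℝ := 13 * (Qz n x y : ℝ) with hQdef
  have hQz1 : (1:ℝ) ≤ (Qz n x y : ℝ) := by exact_mod_cast Qz_ge_one hx
  have hQ0 : 0 ≤ Q := by rw [hQdef]; linarith
  have bn : jap n ^ (2*s) ≤ Q ^ ((1/2)*(2*s)) := jap_rpow_le hQ0 (by linarith) hn
  have b1 : jap w1 ^ τ ≤ Q ^ ((1/2)*τ) := jap_rpow_le hQ0 hτ h1
  have b2 : jap w2 ^ τ ≤ Q ^ ((1/2)*τ) := jap_rpow_le hQ0 hτ h2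
  have b3 : jap w3 ^ τ ≤ Q ^ ((1/2)*τ) := jap_rpow_le hQ0 hτ h3
  have b4 : jap w4 ^ δ ≤ Q ^ ((1/2)*δ) := jap_rpow_le hQ0 hδ h4
  have bxy : jap x * jap y ≤ 2 * |(x:ℝ)| * |(y:ℝ)| := jap_mul_jap_le hx hy
  have hprod : jap n ^ (2*s) * jap w1 ^ τ * jap w2 ^ τ * jap w3 ^ τ
      * (jap x * jap y * jap w4 ^ δ)
      ≤ Q ^ ((1/2)*(2*s)) * Q ^ ((1/2)*τ) * Q ^ ((1/2)*τ) * Q ^ ((1/2)*τ)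
        * (2 * |(x:ℝ)| * |(y:ℝ)| * Q ^ ((1/2)*δ)) := by
    have p1 : 0 ≤ jap n ^ (2*s) := (Real.rpow_pos_of_pos (jap_pos n) _).le
    gcongr <;> first
      | exact (Real.rpow_pos_of_pos (jap_pos _) _).le
      | exact Real.rpow_nonneg (jap_pos _).le _
      | exact mul_nonneg (mul_nonneg (jap_pos _).le (jap_pos _).le)
          (Real.rpow_nonneg (jap_pos _).le _)
      | assumption
  have hQpos : (0:ℝ) < Q := by rw [hQdef]; linarith
  have e : Q ^ ((1/2)*(2*s)) * Q ^ ((1/2)*τ) * Q ^ ((1/2)*τ) * Q ^ ((1/2)*τ) * Q ^ ((1/2)*δ)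
      = Q := by
    rw [← Real.rpow_add hQpos, ← Real.rpow_add hQpos, ← Real.rpow_add hQpos,
      ← Real.rpow_add hQpos,
      show (1/2)*(2*s) + (1/2)*τ + (1/2)*τ + (1/2)*τ + (1/2)*δ = 1 by linarith,
      Real.rpow_one]
  have hQcollect : Q ^ ((1/2)*(2*s)) * Q ^ ((1/2)*τ) * Q ^ ((1/2)*τ) * Q ^ ((1/2)*τ)
        * (2 * |(x:ℝ)| * |(y:ℝ)| * Q ^ ((1/2)*δ))
      = 2 * |(x:ℝ)| * |(y:ℝ)| * Q := by
    calc Q ^ ((1/2)*(2*s)) * Q ^ ((1/2)*τ) * Q ^ ((1/2)*τ) * Q ^ ((1/2)*τ)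
        * (2 * |(x:ℝ)| * |(y:ℝ)| * Q ^ ((1/2)*δ))
        = Q ^ ((1/2)*(2*s)) * Q ^ ((1/2)*τ) * Q ^ ((1/2)*τ) * Q ^ ((1/2)*τ) * Q ^ ((1/2)*δ)
          * (2 * |(x:ℝ)| * |(y:ℝ)|) := by ring
      _ = Q * (2 * |(x:ℝ)| * |(y:ℝ)|) := by rw [e]
      _ = 2 * |(x:ℝ)| * |(y:ℝ)| * Q := by ring
  have hphi : |(phi (n+x, n+x+y, n+y) n : ℝ)| = 2 * |(x:ℝ)| * |(y:ℝ)| * (Qz n x y : ℝ) := by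
    have := phi_eq n x y
    have hc : ((phi (n+x, n+x+y, n+y) n : ℤ) : ℝ) = -(2*(x:ℝ)*(y:ℝ)) * (Qz n x y : ℝ) := by
      rw [this]; push_cast; ring
    rw [hc, abs_mul, abs_neg, abs_mul, abs_mul]
    rw [abs_of_nonneg (by linarith : (0:ℝ) ≤ (Qz n x y : ℝ)), abs_of_nonneg (by norm_num : (0:ℝ) ≤ 2)]
  rw [hphi]
  calc jap n ^ (2*s) * jap w1 ^ τ * jap w2 ^ τ * jap w3 ^ τ * (jap x * jap y * jap w4 ^ δ)
      ≤ 2 * |(x:ℝ)| * |(y:ℝ)| * Q := by rw [← hQcollect]; exact hprod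
    _ = 13 * (2 * |(x:ℝ)| * |(y:ℝ)| * (Qz n x y : ℝ)) := by rw [hQdef]; ring

lemma abs_phi (n x y : ℤ) :
    |(phi (n+x, n+x+y, n+y) n : ℝ)| = 2 * |(x:ℝ)| * |(y:ℝ)| * (Qz n x y : ℝ) := by
  have hc : ((phi (n+x, n+x+y, n+y) n : ℤ) : ℝ) = -(2*(x:ℝ)*(y:ℝ)) * (Qz n x y : ℝ) := by
    rw [phi_eq n x y]; push_cast; ring
  have hQ0 : (0:ℝ) ≤ (Qz n x y : ℝ) := by
    have h6 : 0 ≤ 6 * Qz n x y := by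
      rw [Qz_id]; positivity
    have : (0:ℤ) ≤ Qz n x y := by omega
    exact_mod_cast this
  rw [hc, abs_mul, abs_neg, abs_mul, abs_mul, abs_of_nonneg (by norm_num : (0:ℝ) ≤ 2),
    abs_of_nonneg hQ0]

lemma jap_ge_abs (m : ℤ) : |(m:ℝ)| ≤ jap m := by
  have h := jap_sq m
  nlinarith [jap_pos m, abs_nonneg ((m:ℝ)), sq_abs ((m:ℝ))]

lemma jap_zero : jap 0 = 1 := by
  simp [jap]

lemma rpow_prod_le {u v : ℤ} {α β : ℝ} (hα : 0 ≤ α) (hβ : 0 ≤ β) :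
    jap u ^ (-α) * jap v ^ (-β) ≤ jap u ^ (-(α+β)) + jap v ^ (-(α+β)) := by
  rcases le_total (jap u) (jap v) with h | h
  · have hv : jap v ^ (-β) ≤ jap u ^ (-β) := by
      rw [Real.rpow_neg (jap_pos v).le, Real.rpow_neg (jap_pos u).le]
      exact inv_anti₀ (Real.rpow_pos_of_pos (jap_pos u) _)
        (Real.rpow_le_rpow (jap_pos u).le h hβ)
    calc jap u ^ (-α) * jap v ^ (-β) ≤ jap u ^ (-α) * jap u ^ (-β) := by
          exact mul_le_mul_of_nonneg_left hv (Real.rpow_nonneg (jap_pos u).le _)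
      _ = jap u ^ (-(α+β)) := by rw [← Real.rpow_add (jap_pos u)]; ring_nf
      _ ≤ _ := le_add_of_nonneg_right (Real.rpow_nonneg (jap_pos v).le _)
  · have hu : jap u ^ (-α) ≤ jap v ^ (-α) := by
      rw [Real.rpow_neg (jap_pos v).le, Real.rpow_neg (jap_pos u).le]
      exact inv_anti₀ (Real.rpow_pos_of_pos (jap_pos v) _)
        (Real.rpow_le_rpow (jap_pos v).le h hα)
    calc jap u ^ (-α) * jap v ^ (-β) ≤ jap v ^ (-α) * jap v ^ (-β) := by
          exact mul_le_mul_of_nonneg_right hu (Real.rpow_nonneg (jap_pos v).le _)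
      _ = jap v ^ (-(α+β)) := by rw [← Real.rpow_add (jap_pos v)]; ring_nf
      _ ≤ _ := le_add_of_nonneg_left (Real.rpow_nonneg (jap_pos u).le _)

lemma conv_sum (A B : ℤ) (α β : ℝ) (hα : 0 ≤ α) (hβ : 0 ≤ β) :
    (∑' z : ℤ, ENNReal.ofReal (jap (z - A) ^ (-α)) * ENNReal.ofReal (jap (z - B) ^ (-β)))
      ≤ 2 * ∑' m : ℤ, ENNReal.ofReal (jap m ^ (-(α+β))) := by
  have step : ∀ z : ℤ,
      ENNReal.ofReal (jap (z - A) ^ (-α)) * ENNReal.ofReal (jap (z - B) ^ (-β))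
        ≤ ENNReal.ofReal (jap (z - A) ^ (-(α+β))) + ENNReal.ofReal (jap (z - B) ^ (-(α+β))) := by
    intro z
    rw [← ENNReal.ofReal_mul (Real.rpow_nonneg (jap_pos _).le _),
      ← ENNReal.ofReal_add (Real.rpow_nonneg (jap_pos _).le _) (Real.rpow_nonneg (jap_pos _).le _)]
    exact ENNReal.ofReal_le_ofReal (rpow_prod_le hα hβ)
  calc _ ≤ ∑' z : ℤ, (ENNReal.ofReal (jap (z - A) ^ (-(α+β)))
        + ENNReal.ofReal (jap (z - B) ^ (-(α+β)))) := Summable.tsum_le_tsum step ENNReal.summable ENNReal.summable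
    _ = (∑' z : ℤ, ENNReal.ofReal (jap (z - A) ^ (-(α+β))))
        + ∑' z : ℤ, ENNReal.ofReal (jap (z - B) ^ (-(α+β))) := ENNReal.tsum_add
    _ = (∑' m : ℤ, ENNReal.ofReal (jap m ^ (-(α+β))))
        + ∑' m : ℤ, ENNReal.ofReal (jap m ^ (-(α+β))) := by
        have eA := (Equiv.subRight A).tsum_eq (fun m => ENNReal.ofReal (jap m ^ (-(α+β))))
        have eB := (Equiv.subRight B).tsum_eq (fun m => ENNReal.ofReal (jap m ^ (-(α+β))))
        simp only [Equiv.subRight_apply] at eA eB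
        rw [eA, eB]
    _ = _ := (two_mul _).symm

lemma sum_jap_ne_top {ρ : ℝ} (hρ : 1 < ρ) :
    (∑' m : ℤ, ENNReal.ofReal (jap m ^ (-ρ))) ≠ ∞ := by
  set g : ℤ → ℝ := fun m => |(m:ℝ)| ^ (-ρ) + (if m = 0 then (1:ℝ) else 0) with hg
  have hgsum : Summable g := by
    apply (Real.summable_abs_int_rpow hρ).add
    apply summable_of_ne_finset_zero (s := {(0:ℤ)})
    intro m hm
    simp only [Finset.mem_singleton] at hm
    simp [hm]
  have hgnn : ∀ m, 0 ≤ g m := by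
    intro m
    apply add_nonneg (Real.rpow_nonneg (abs_nonneg _) _)
    split <;> norm_num
  have hle : ∀ m : ℤ, jap m ^ (-ρ) ≤ g m := by
    intro m
    by_cases hm : m = 0
    · subst hm
      simp only [hg, jap_zero, Real.one_rpow, if_pos rfl]
      have : |((0:ℤ):ℝ)| ^ (-ρ) = 0 := by
        simp only [Int.cast_zero, abs_zero]
        exact Real.zero_rpow (by linarith)
      rw [this]; norm_num
    · have habs : (0:ℝ) < |(m:ℝ)| := by
        simp only [abs_pos, ne_eq, Int.cast_eq_zero]; exact hm
      have : jap m ^ (-ρ) ≤ |(m:ℝ)| ^ (-ρ) := by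
        rw [Real.rpow_neg (jap_pos m).le, Real.rpow_neg (abs_nonneg _)]
        exact inv_anti₀ (Real.rpow_pos_of_pos habs _)
          (Real.rpow_le_rpow (abs_nonneg _) (jap_ge_abs m) (by linarith))
      simp only [hg]
      have h2 : (0:ℝ) ≤ (if m = 0 then (1:ℝ) else 0) := by split <;> norm_num
      linarith
  apply ne_top_of_le_ne_top ENNReal.ofReal_ne_top
  calc (∑' m : ℤ, ENNReal.ofReal (jap m ^ (-ρ)))
      ≤ ∑' m : ℤ, ENNReal.ofReal (g m) :=
        Summable.tsum_le_tsum (fun m => ENNReal.ofReal_le_ofReal (hle m)) ENNReal.summable ENNReal.summable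
    _ = ENNReal.ofReal (∑' m, g m) := (ENNReal.ofReal_tsum_of_nonneg hgnn hgsum).symm

lemma ennreal_mul_le_sq_add_sq (a b : ℝ≥0∞) : a * b ≤ a^2 + b^2 := by
  rcases le_total a b with h | h
  · calc a * b ≤ b * b := mul_le_mul_left h b
    _ = b^2 := (sq b).symm
    _ ≤ _ := le_add_self
  · calc a * b ≤ a * a := mul_le_mul_right h a
    _ = a^2 := (sq a).symm
    _ ≤ _ := le_self_add

lemma masterE (s τ δ : ℝ) (hs : 0 ≤ s) (hτ : 0 ≤ τ) (hδ : 0 ≤ δ)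
    (hsum : 2*s + 3*τ + δ = 2) (n x y w1 w2 w3 w4 : ℤ)
    (hw : x ≠ 0 → y ≠ 0 →
      ((1:ℝ)+(w1:ℝ)^2 ≤ 13*(Qz n x y:ℝ)) ∧ ((1:ℝ)+(w2:ℝ)^2 ≤ 13*(Qz n x y:ℝ)) ∧
      ((1:ℝ)+(w3:ℝ)^2 ≤ 13*(Qz n x y:ℝ)) ∧ ((1:ℝ)+(w4:ℝ)^2 ≤ 13*(Qz n x y:ℝ))) :
    ENNReal.ofReal (jap n ^ (2*s) / |(phi (n+x, n+x+y, n+y) n : ℝ)|)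
      * ENNReal.ofReal (jap w1 ^ τ) * ENNReal.ofReal (jap w2 ^ τ) * ENNReal.ofReal (jap w3 ^ τ)
    ≤ ENNReal.ofReal 13 * ENNReal.ofReal (jap x ^ (-(1:ℝ)))
      * ENNReal.ofReal (jap y ^ (-(1:ℝ))) * ENNReal.ofReal (jap w4 ^ (-δ)) := by
  by_cases hx : x = 0
  · have hphi0 : phi (n+x, n+x+y, n+y) n = 0 := by subst hx; simp only [phi]; ring
    rw [hphi0]
    simp
  by_cases hy : y = 0
  · have hphi0 : phi (n+x, n+x+y, n+y) n = 0 := by subst hy; simp only [phi]; ring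
    rw [hphi0]
    simp
  obtain ⟨h1, h2, h3, h4⟩ := hw hx hy
  have hn : (1:ℝ)+(n:ℝ)^2 ≤ 13*(Qz n x y:ℝ) := freq_bound hx n (Or.inl rfl)
  have hQz1 : (1:ℝ) ≤ (Qz n x y : ℝ) := by exact_mod_cast Qz_ge_one hx
  have hxa : (0:ℝ) < |(x:ℝ)| := by simp [abs_pos, hx]
  have hya : (0:ℝ) < |(y:ℝ)| := by simp [abs_pos, hy]
  have hF : (0:ℝ) < |(phi (n+x, n+x+y, n+y) n : ℝ)| := by
    rw [abs_phi]; positivity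
  have hG : (0:ℝ) < jap x * jap y * jap w4 ^ δ := by
    have := jap_pos x; have := jap_pos y
    have := Real.rpow_pos_of_pos (jap_pos w4) δ
    positivity
  -- combine LHS into one ofReal
  rw [← ENNReal.ofReal_mul (div_nonneg (Real.rpow_nonneg (jap_pos n).le _) (abs_nonneg _) :
    (0:ℝ) ≤ jap n ^ (2*s) / |(phi (n+x, n+x+y, n+y) n : ℝ)|)]
  rw [← ENNReal.ofReal_mul (mul_nonneg
    (div_nonneg (Real.rpow_nonneg (jap_pos n).le _) (abs_nonneg _))
    (Real.rpow_nonneg (jap_pos w1).le _) :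
    (0:ℝ) ≤ jap n ^ (2*s) / |(phi (n+x, n+x+y, n+y) n : ℝ)| * jap w1 ^ τ)]
  rw [← ENNReal.ofReal_mul (mul_nonneg (mul_nonneg
    (div_nonneg (Real.rpow_nonneg (jap_pos n).le _) (abs_nonneg _))
    (Real.rpow_nonneg (jap_pos w1).le _)) (Real.rpow_nonneg (jap_pos w2).le _) :
    (0:ℝ) ≤ jap n ^ (2*s) / |(phi (n+x, n+x+y, n+y) n : ℝ)| * jap w1 ^ τ * jap w2 ^ τ)]
  rw [← ENNReal.ofReal_mul (by norm_num : (0:ℝ) ≤ (13:ℝ))]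
  rw [← ENNReal.ofReal_mul (mul_nonneg (by norm_num) (Real.rpow_nonneg (jap_pos x).le _) :
    (0:ℝ) ≤ 13 * jap x ^ (-(1:ℝ)))]
  rw [← ENNReal.ofReal_mul (mul_nonneg (mul_nonneg (by norm_num)
    (Real.rpow_nonneg (jap_pos x).le _)) (Real.rpow_nonneg (jap_pos y).le _) :
    (0:ℝ) ≤ 13 * jap x ^ (-(1:ℝ)) * jap y ^ (-(1:ℝ)))]
  apply ENNReal.ofReal_le_ofReal
  have hrhs : 13 * jap x ^ (-(1:ℝ)) * jap y ^ (-(1:ℝ)) * jap w4 ^ (-δ)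
      = 13 / (jap x * jap y * jap w4 ^ δ) := by
    rw [Real.rpow_neg (jap_pos x).le, Real.rpow_neg (jap_pos y).le,
      Real.rpow_neg (jap_pos w4).le, Real.rpow_one, Real.rpow_one]
    field_simp
  rw [hrhs, div_mul_eq_mul_div, div_mul_eq_mul_div, div_mul_eq_mul_div,
    div_le_div_iff₀ hF hG]
  calc jap n ^ (2*s) * jap w1 ^ τ * jap w2 ^ τ * jap w3 ^ τ * (jap x * jap y * jap w4 ^ δ)
      ≤ 13 * |(phi (n+x, n+x+y, n+y) n : ℝ)| :=
        master_real s τ δ hs hτ hδ hsum hx hy h1 h2 h3 h4 hn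
    _ = 13 * |(phi (n+x, n+x+y, n+y) n : ℝ)| := rfl

lemma japE_le_one (m : ℤ) (r : ℝ) (hr : 0 ≤ r) : ENNReal.ofReal (jap m ^ (-r)) ≤ 1 := by
  have h : jap m ^ (-r) ≤ 1 := by
    rw [Real.rpow_neg (jap_pos m).le]
    have h1 : (1:ℝ) ≤ jap m ^ r := by
      calc (1:ℝ) = 1 ^ r := (Real.one_rpow r).symm
        _ ≤ jap m ^ r := Real.rpow_le_rpow (by norm_num) (jap_one_le m) hr
    exact inv_le_one_of_one_le₀ h1
  calc ENNReal.ofReal (jap m ^ (-r)) ≤ ENNReal.ofReal 1 := ENNReal.ofReal_le_ofReal h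
    _ = 1 := ENNReal.ofReal_one

lemma tsum_sq (W : ℤ → ℝ≥0∞) : (∑' w : ℤ × ℤ, W w.1 * W w.2) = (∑' m, W m)^2 := by
  rw [ENNReal.tsum_prod']
  have : ∀ a : ℤ, (∑' b : ℤ, W a * W b) = W a * ∑' m, W m := fun a => ENNReal.tsum_mul_left
  rw [tsum_congr this, ENNReal.tsum_mul_right, sq]

lemma tsum_triple (W : ℤ → ℝ≥0∞) :
    (∑' q : ℤ × ℤ × ℤ, W q.1 * W q.2.1 * W q.2.2) = (∑' m, W m)^3 := by
  rw [ENNReal.tsum_prod']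
  have h1 : ∀ a : ℤ, (∑' w : ℤ × ℤ, W a * W w.1 * W w.2)
      = W a * (∑' m, W m)^2 := by
    intro a
    have : ∀ w : ℤ × ℤ, W a * W w.1 * W w.2 = W a * (W w.1 * W w.2) := fun w => by ring
    rw [tsum_congr this, ENNReal.tsum_mul_left, tsum_sq]
  rw [tsum_congr h1, ENNReal.tsum_mul_right]
  ring

lemma D_bound (W : ℤ → ℝ≥0∞) (f1 f2 f3 : ℤ × ℤ × ℤ → ℤ)
    (hinj : Function.Injective (fun p : ℤ×ℤ×ℤ => (f1 p, f2 p, f3 p))) :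
    (∑' p : ℤ × ℤ × ℤ, W (f1 p) * W (f2 p) * W (f3 p)) ≤ (∑' m, W m)^3 := by
  rw [← tsum_triple W]
  exact Summable.tsum_le_tsum_of_inj _ hinj (fun _ _ => zero_le) (fun p => le_rfl)
    ENNReal.summable ENNReal.summable

lemma S_core (W : ℤ → ℝ≥0∞) (Amax : ℝ≥0∞) (δ : ℝ) (hδ : 0 ≤ δ) (A1 A2 : ℤ × ℤ → ℤ) :
    (∑' q : ℤ × ℤ × ℤ, ENNReal.ofReal 13 * ENNReal.ofReal (jap (q.1 - A1 q.2) ^ (-(1:ℝ)))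
      * ENNReal.ofReal (jap (q.1 - A2 q.2) ^ (-δ)) * (Amax * (W q.2.1 * W q.2.2)))
    ≤ ENNReal.ofReal 13 * (2 * ∑' m : ℤ, ENNReal.ofReal (jap m ^ (-(1+δ))))
        * (Amax * (∑' m, W m)^2) := by
  rw [ENNReal.tsum_prod']
  rw [ENNReal.tsum_comm]
  have inner : ∀ w : ℤ × ℤ,
      (∑' z : ℤ, ENNReal.ofReal 13 * ENNReal.ofReal (jap (z - A1 w) ^ (-(1:ℝ)))
        * ENNReal.ofReal (jap (z - A2 w) ^ (-δ)) * (Amax * (W w.1 * W w.2)))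
      ≤ (ENNReal.ofReal 13 * (Amax * (W w.1 * W w.2)))
          * (2 * ∑' m : ℤ, ENNReal.ofReal (jap m ^ (-(1+δ)))) := by
    intro w
    have e1 : ∀ z : ℤ, ENNReal.ofReal 13 * ENNReal.ofReal (jap (z - A1 w) ^ (-(1:ℝ)))
        * ENNReal.ofReal (jap (z - A2 w) ^ (-δ)) * (Amax * (W w.1 * W w.2))
        = (ENNReal.ofReal 13 * (Amax * (W w.1 * W w.2)))
          * (ENNReal.ofReal (jap (z - A1 w) ^ (-(1:ℝ))) * ENNReal.ofReal (jap (z - A2 w) ^ (-δ))) := by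
      intro z; ring
    rw [tsum_congr e1, ENNReal.tsum_mul_left]
    exact mul_le_mul_right (conv_sum (A1 w) (A2 w) 1 δ (by norm_num) hδ) _
  calc _ ≤ ∑' w : ℤ × ℤ, (ENNReal.ofReal 13 * (Amax * (W w.1 * W w.2)))
        * (2 * ∑' m : ℤ, ENNReal.ofReal (jap m ^ (-(1+δ)))) :=
      Summable.tsum_le_tsum inner ENNReal.summable ENNReal.summable
    _ = (∑' w : ℤ × ℤ, W w.1 * W w.2) * (ENNReal.ofReal 13 * Amax
        * (2 * ∑' m : ℤ, ENNReal.ofReal (jap m ^ (-(1+δ))))) := by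
      rw [← ENNReal.tsum_mul_right]
      apply tsum_congr; intro w; ring
    _ = _ := by rw [tsum_sq]; ring

lemma term_D (s τ δ : ℝ) (hs : 0 ≤ s) (hτ : 0 ≤ τ) (hδ : 0 ≤ δ)
    (hsum : 2*s + 3*τ + δ = 2) (W : ℤ → ℝ≥0∞)
    (g1 g2 g3 : ℤ × ℤ × ℤ → ℤ)
    (hw : ∀ p : ℤ × ℤ × ℤ, p.2.1 ≠ 0 → p.2.2 ≠ 0 →
      ((1:ℝ)+((g1 p):ℝ)^2 ≤ 13*(Qz p.1 p.2.1 p.2.2:ℝ)) ∧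
      ((1:ℝ)+((g2 p):ℝ)^2 ≤ 13*(Qz p.1 p.2.1 p.2.2:ℝ)) ∧
      ((1:ℝ)+((g3 p):ℝ)^2 ≤ 13*(Qz p.1 p.2.1 p.2.2:ℝ)))
    (hinj : Function.Injective fun p : ℤ×ℤ×ℤ => (g1 p, g2 p, g3 p)) :
    (∑' p : ℤ × ℤ × ℤ,
      ENNReal.ofReal (jap p.1 ^ (2*s) / |(phi (p.1+p.2.1, p.1+p.2.1+p.2.2, p.1+p.2.2) p.1 : ℝ)|)
        * (ENNReal.ofReal (jap (g1 p) ^ τ) * W (g1 p))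
        * (ENNReal.ofReal (jap (g2 p) ^ τ) * W (g2 p))
        * (ENNReal.ofReal (jap (g3 p) ^ τ) * W (g3 p)))
      ≤ ENNReal.ofReal 13 * (∑' m, W m)^3 := by
  have point : ∀ p : ℤ × ℤ × ℤ,
      ENNReal.ofReal (jap p.1 ^ (2*s) / |(phi (p.1+p.2.1, p.1+p.2.1+p.2.2, p.1+p.2.2) p.1 : ℝ)|)
        * (ENNReal.ofReal (jap (g1 p) ^ τ) * W (g1 p))
        * (ENNReal.ofReal (jap (g2 p) ^ τ) * W (g2 p))
        * (ENNReal.ofReal (jap (g3 p) ^ τ) * W (g3 p))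
      ≤ ENNReal.ofReal 13 * (W (g1 p) * W (g2 p) * W (g3 p)) := by
    intro ⟨n, x, y⟩
    have hmE := masterE s τ δ hs hτ hδ hsum n x y (g1 (n,x,y)) (g2 (n,x,y)) (g3 (n,x,y)) n
      (by intro hx hy
          obtain ⟨h1, h2, h3⟩ := hw (n,x,y) hx hy
          exact ⟨h1, h2, h3, freq_bound hx n (Or.inl rfl)⟩)
    calc ENNReal.ofReal (jap n ^ (2*s) / |(phi (n+x, n+x+y, n+y) n : ℝ)|)
          * (ENNReal.ofReal (jap (g1 (n,x,y)) ^ τ) * W (g1 (n,x,y)))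
          * (ENNReal.ofReal (jap (g2 (n,x,y)) ^ τ) * W (g2 (n,x,y)))
          * (ENNReal.ofReal (jap (g3 (n,x,y)) ^ τ) * W (g3 (n,x,y)))
        = (ENNReal.ofReal (jap n ^ (2*s) / |(phi (n+x, n+x+y, n+y) n : ℝ)|)
            * ENNReal.ofReal (jap (g1 (n,x,y)) ^ τ) * ENNReal.ofReal (jap (g2 (n,x,y)) ^ τ)
            * ENNReal.ofReal (jap (g3 (n,x,y)) ^ τ))
          * (W (g1 (n,x,y)) * W (g2 (n,x,y)) * W (g3 (n,x,y))) := by ring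
      _ ≤ (ENNReal.ofReal 13 * ENNReal.ofReal (jap x ^ (-(1:ℝ)))
            * ENNReal.ofReal (jap y ^ (-(1:ℝ))) * ENNReal.ofReal (jap n ^ (-δ)))
          * (W (g1 (n,x,y)) * W (g2 (n,x,y)) * W (g3 (n,x,y))) :=
        mul_le_mul_left hmE _
      _ ≤ (ENNReal.ofReal 13 * 1 * 1 * 1)
          * (W (g1 (n,x,y)) * W (g2 (n,x,y)) * W (g3 (n,x,y))) := by
        gcongr
        · exact japE_le_one x 1 (by norm_num)
        · exact japE_le_one y 1 (by norm_num)
        · exact japE_le_one n δ hδ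
      _ = ENNReal.ofReal 13 * (W (g1 (n,x,y)) * W (g2 (n,x,y)) * W (g3 (n,x,y))) := by ring
  calc _ ≤ ∑' p : ℤ × ℤ × ℤ, ENNReal.ofReal 13 * (W (g1 p) * W (g2 p) * W (g3 p)) :=
      Summable.tsum_le_tsum point ENNReal.summable ENNReal.summable
    _ = ENNReal.ofReal 13 * ∑' p : ℤ × ℤ × ℤ, W (g1 p) * (W (g2 p) * W (g3 p)) := by
      rw [← ENNReal.tsum_mul_left]; apply tsum_congr; intro p; ring
    _ ≤ ENNReal.ofReal 13 * (∑' m, W m)^3 := by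
      apply mul_le_mul_right
      calc (∑' p : ℤ × ℤ × ℤ, W (g1 p) * (W (g2 p) * W (g3 p)))
          = ∑' p : ℤ × ℤ × ℤ, W (g1 p) * W (g2 p) * W (g3 p) := by
            apply tsum_congr; intro p; ring
        _ ≤ _ := D_bound W g1 g2 g3 hinj

lemma term_S (s τ δ : ℝ) (hs : 0 ≤ s) (hτ : 0 ≤ τ) (hδ : 0 ≤ δ)
    (hsum : 2*s + 3*τ + δ = 2) (W : ℤ → ℝ≥0∞) (Amax : ℝ≥0∞)
    (g1 g2 g3 w4 : ℤ × ℤ × ℤ → ℤ)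
    (hw : ∀ p : ℤ × ℤ × ℤ, p.2.1 ≠ 0 → p.2.2 ≠ 0 →
      ((1:ℝ)+((g1 p):ℝ)^2 ≤ 13*(Qz p.1 p.2.1 p.2.2:ℝ)) ∧
      ((1:ℝ)+((g2 p):ℝ)^2 ≤ 13*(Qz p.1 p.2.1 p.2.2:ℝ)) ∧
      ((1:ℝ)+((g3 p):ℝ)^2 ≤ 13*(Qz p.1 p.2.1 p.2.2:ℝ)) ∧
      ((1:ℝ)+((w4 p):ℝ)^2 ≤ 13*(Qz p.1 p.2.1 p.2.2:ℝ)))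
    (G : (ℤ×ℤ×ℤ) ≃ (ℤ×ℤ×ℤ)) (A1 A2 : ℤ × ℤ → ℤ)
    (hpoint : ∀ p : ℤ×ℤ×ℤ,
      ENNReal.ofReal (jap p.2.1 ^ (-(1:ℝ))) * ENNReal.ofReal (jap p.2.2 ^ (-(1:ℝ)))
        * ENNReal.ofReal (jap (w4 p) ^ (-δ)) * (W (g1 p) * W (g2 p) * W (g3 p))
      ≤ ENNReal.ofReal (jap ((G p).1 - A1 (G p).2) ^ (-(1:ℝ)))
        * ENNReal.ofReal (jap ((G p).1 - A2 (G p).2) ^ (-δ))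
        * (Amax * (W (G p).2.1 * W (G p).2.2))) :
    (∑' p : ℤ × ℤ × ℤ,
      ENNReal.ofReal (jap p.1 ^ (2*s) / |(phi (p.1+p.2.1, p.1+p.2.1+p.2.2, p.1+p.2.2) p.1 : ℝ)|)
        * (ENNReal.ofReal (jap (g1 p) ^ τ) * W (g1 p))
        * (ENNReal.ofReal (jap (g2 p) ^ τ) * W (g2 p))
        * (ENNReal.ofReal (jap (g3 p) ^ τ) * W (g3 p)))
      ≤ ENNReal.ofReal 13 * (2 * ∑' m : ℤ, ENNReal.ofReal (jap m ^ (-(1+δ))))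
          * (Amax * (∑' m, W m)^2) := by
  have point : ∀ p : ℤ × ℤ × ℤ,
      ENNReal.ofReal (jap p.1 ^ (2*s) / |(phi (p.1+p.2.1, p.1+p.2.1+p.2.2, p.1+p.2.2) p.1 : ℝ)|)
        * (ENNReal.ofReal (jap (g1 p) ^ τ) * W (g1 p))
        * (ENNReal.ofReal (jap (g2 p) ^ τ) * W (g2 p))
        * (ENNReal.ofReal (jap (g3 p) ^ τ) * W (g3 p))
      ≤ ENNReal.ofReal 13 * (ENNReal.ofReal (jap ((G p).1 - A1 (G p).2) ^ (-(1:ℝ)))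
          * ENNReal.ofReal (jap ((G p).1 - A2 (G p).2) ^ (-δ))
          * (Amax * (W (G p).2.1 * W (G p).2.2))) := by
    intro ⟨n, x, y⟩
    have hmE := masterE s τ δ hs hτ hδ hsum n x y (g1 (n,x,y)) (g2 (n,x,y)) (g3 (n,x,y))
      (w4 (n,x,y))
      (by intro hx hy; exact hw (n,x,y) hx hy)
    calc ENNReal.ofReal (jap n ^ (2*s) / |(phi (n+x, n+x+y, n+y) n : ℝ)|)
          * (ENNReal.ofReal (jap (g1 (n,x,y)) ^ τ) * W (g1 (n,x,y)))
          * (ENNReal.ofReal (jap (g2 (n,x,y)) ^ τ) * W (g2 (n,x,y)))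
          * (ENNReal.ofReal (jap (g3 (n,x,y)) ^ τ) * W (g3 (n,x,y)))
        = (ENNReal.ofReal (jap n ^ (2*s) / |(phi (n+x, n+x+y, n+y) n : ℝ)|)
            * ENNReal.ofReal (jap (g1 (n,x,y)) ^ τ) * ENNReal.ofReal (jap (g2 (n,x,y)) ^ τ)
            * ENNReal.ofReal (jap (g3 (n,x,y)) ^ τ))
          * (W (g1 (n,x,y)) * W (g2 (n,x,y)) * W (g3 (n,x,y))) := by ring
      _ ≤ (ENNReal.ofReal 13 * ENNReal.ofReal (jap x ^ (-(1:ℝ)))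
            * ENNReal.ofReal (jap y ^ (-(1:ℝ))) * ENNReal.ofReal (jap (w4 (n,x,y)) ^ (-δ)))
          * (W (g1 (n,x,y)) * W (g2 (n,x,y)) * W (g3 (n,x,y))) :=
        mul_le_mul_left hmE _
      _ = ENNReal.ofReal 13 * (ENNReal.ofReal (jap x ^ (-(1:ℝ)))
            * ENNReal.ofReal (jap y ^ (-(1:ℝ))) * ENNReal.ofReal (jap (w4 (n,x,y)) ^ (-δ))
            * (W (g1 (n,x,y)) * W (g2 (n,x,y)) * W (g3 (n,x,y)))) := by ring
      _ ≤ _ := mul_le_mul_right (hpoint (n,x,y)) _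
  calc _ ≤ ∑' p : ℤ×ℤ×ℤ, ENNReal.ofReal 13
        * (ENNReal.ofReal (jap ((G p).1 - A1 (G p).2) ^ (-(1:ℝ)))
          * ENNReal.ofReal (jap ((G p).1 - A2 (G p).2) ^ (-δ))
          * (Amax * (W (G p).2.1 * W (G p).2.2))) :=
      Summable.tsum_le_tsum point ENNReal.summable ENNReal.summable
    _ = ∑' q : ℤ×ℤ×ℤ, ENNReal.ofReal 13
        * (ENNReal.ofReal (jap (q.1 - A1 q.2) ^ (-(1:ℝ)))
          * ENNReal.ofReal (jap (q.1 - A2 q.2) ^ (-δ))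
          * (Amax * (W q.2.1 * W q.2.2))) :=
      G.tsum_eq (fun q => ENNReal.ofReal 13
        * (ENNReal.ofReal (jap (q.1 - A1 q.2) ^ (-(1:ℝ)))
          * ENNReal.ofReal (jap (q.1 - A2 q.2) ^ (-δ))
          * (Amax * (W q.2.1 * W q.2.2))))
    _ ≤ _ :=
      le_trans (le_of_eq (tsum_congr fun q => by ring)) (S_core W Amax δ hδ A1 A2)

lemma split_bound (E : ℤ×ℤ×ℤ → ℝ≥0∞) (u W : ℤ → ℝ≥0∞) (τ : ℝ)
    (usq : ∀ m : ℤ, u m ^ 2 = ENNReal.ofReal (jap m ^ τ) * W m) (sel : ℤ×ℤ×ℤ → ℤ) :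
    (∑' p : ℤ×ℤ×ℤ, E p * u (sel p)^2 * u (p.1+p.2.1) * u (p.1+p.2.1+p.2.2)
        * u (p.1+p.2.2) * u p.1)
    ≤ (∑' p : ℤ×ℤ×ℤ, E p * (ENNReal.ofReal (jap (sel p) ^ τ) * W (sel p))
        * (ENNReal.ofReal (jap (p.1+p.2.1) ^ τ) * W (p.1+p.2.1))
        * (ENNReal.ofReal (jap (p.1+p.2.1+p.2.2) ^ τ) * W (p.1+p.2.1+p.2.2)))
      + (∑' p : ℤ×ℤ×ℤ, E p * (ENNReal.ofReal (jap (sel p) ^ τ) * W (sel p))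
        * (ENNReal.ofReal (jap (p.1+p.2.1) ^ τ) * W (p.1+p.2.1))
        * (ENNReal.ofReal (jap p.1 ^ τ) * W p.1))
      + (∑' p : ℤ×ℤ×ℤ, E p * (ENNReal.ofReal (jap (sel p) ^ τ) * W (sel p))
        * (ENNReal.ofReal (jap (p.1+p.2.2) ^ τ) * W (p.1+p.2.2))
        * (ENNReal.ofReal (jap (p.1+p.2.1+p.2.2) ^ τ) * W (p.1+p.2.1+p.2.2)))
      + (∑' p : ℤ×ℤ×ℤ, E p * (ENNReal.ofReal (jap (sel p) ^ τ) * W (sel p))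
        * (ENNReal.ofReal (jap (p.1+p.2.2) ^ τ) * W (p.1+p.2.2))
        * (ENNReal.ofReal (jap p.1 ^ τ) * W p.1)) := by
  have point : ∀ p : ℤ×ℤ×ℤ,
      E p * u (sel p)^2 * u (p.1+p.2.1) * u (p.1+p.2.1+p.2.2) * u (p.1+p.2.2) * u p.1
      ≤ (E p * (ENNReal.ofReal (jap (sel p) ^ τ) * W (sel p))
          * (ENNReal.ofReal (jap (p.1+p.2.1) ^ τ) * W (p.1+p.2.1))
          * (ENNReal.ofReal (jap (p.1+p.2.1+p.2.2) ^ τ) * W (p.1+p.2.1+p.2.2)))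
        + (E p * (ENNReal.ofReal (jap (sel p) ^ τ) * W (sel p))
          * (ENNReal.ofReal (jap (p.1+p.2.1) ^ τ) * W (p.1+p.2.1))
          * (ENNReal.ofReal (jap p.1 ^ τ) * W p.1))
        + (E p * (ENNReal.ofReal (jap (sel p) ^ τ) * W (sel p))
          * (ENNReal.ofReal (jap (p.1+p.2.2) ^ τ) * W (p.1+p.2.2))
          * (ENNReal.ofReal (jap (p.1+p.2.1+p.2.2) ^ τ) * W (p.1+p.2.1+p.2.2)))
        + (E p * (ENNReal.ofReal (jap (sel p) ^ τ) * W (sel p))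
          * (ENNReal.ofReal (jap (p.1+p.2.2) ^ τ) * W (p.1+p.2.2))
          * (ENNReal.ofReal (jap p.1 ^ τ) * W p.1)) := by
    intro p
    calc E p * u (sel p)^2 * u (p.1+p.2.1) * u (p.1+p.2.1+p.2.2) * u (p.1+p.2.2) * u p.1
        = (E p * u (sel p)^2) * ((u (p.1+p.2.1) * u (p.1+p.2.2))
            * (u (p.1+p.2.1+p.2.2) * u p.1)) := by ring
      _ ≤ (E p * u (sel p)^2) * ((u (p.1+p.2.1)^2 + u (p.1+p.2.2)^2)
            * (u (p.1+p.2.1+p.2.2)^2 + u p.1^2)) :=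
        mul_le_mul_right (mul_le_mul' (ennreal_mul_le_sq_add_sq _ _)
          (ennreal_mul_le_sq_add_sq _ _)) _
      _ = E p * u (sel p)^2 * u (p.1+p.2.1)^2 * u (p.1+p.2.1+p.2.2)^2
          + E p * u (sel p)^2 * u (p.1+p.2.1)^2 * u p.1^2
          + E p * u (sel p)^2 * u (p.1+p.2.2)^2 * u (p.1+p.2.1+p.2.2)^2
          + E p * u (sel p)^2 * u (p.1+p.2.2)^2 * u p.1^2 := by ring
      _ = _ := by rw [usq (sel p), usq (p.1+p.2.1), usq (p.1+p.2.1+p.2.2),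
            usq (p.1+p.2.2), usq p.1]
  calc _ ≤ ∑' p : ℤ×ℤ×ℤ, ((E p * (ENNReal.ofReal (jap (sel p) ^ τ) * W (sel p))
          * (ENNReal.ofReal (jap (p.1+p.2.1) ^ τ) * W (p.1+p.2.1))
          * (ENNReal.ofReal (jap (p.1+p.2.1+p.2.2) ^ τ) * W (p.1+p.2.1+p.2.2)))
        + (E p * (ENNReal.ofReal (jap (sel p) ^ τ) * W (sel p))
          * (ENNReal.ofReal (jap (p.1+p.2.1) ^ τ) * W (p.1+p.2.1))
          * (ENNReal.ofReal (jap p.1 ^ τ) * W p.1))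
        + (E p * (ENNReal.ofReal (jap (sel p) ^ τ) * W (sel p))
          * (ENNReal.ofReal (jap (p.1+p.2.2) ^ τ) * W (p.1+p.2.2))
          * (ENNReal.ofReal (jap (p.1+p.2.1+p.2.2) ^ τ) * W (p.1+p.2.1+p.2.2)))
        + (E p * (ENNReal.ofReal (jap (sel p) ^ τ) * W (sel p))
          * (ENNReal.ofReal (jap (p.1+p.2.2) ^ τ) * W (p.1+p.2.2))
          * (ENNReal.ofReal (jap p.1 ^ τ) * W p.1))) :=
      Summable.tsum_le_tsum point ENNReal.summable ENNReal.summable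
    _ = _ := by rw [ENNReal.tsum_add, ENNReal.tsum_add, ENNReal.tsum_add]

def G1 : (ℤ×ℤ×ℤ) ≃ (ℤ×ℤ×ℤ) where
  toFun p := (p.1, p.1+p.2.1, p.1+p.2.1+p.2.2)
  invFun q := (q.1, q.2.1-q.1, q.2.2-q.2.1)
  left_inv := by rintro ⟨n,x,y⟩; dsimp only; simp only [Prod.mk.injEq, true_and, and_true]; omega
  right_inv := by rintro ⟨z,P,Q⟩; dsimp only; simp only [Prod.mk.injEq, true_and, and_true]; omega

def G2 : (ℤ×ℤ×ℤ) ≃ (ℤ×ℤ×ℤ) where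
  toFun p := (p.1, p.1+p.2.2, p.1+p.2.1+p.2.2)
  invFun q := (q.1, q.2.2-q.2.1, q.2.1-q.1)
  left_inv := by rintro ⟨n,x,y⟩; dsimp only; simp only [Prod.mk.injEq, true_and, and_true]; omega
  right_inv := by rintro ⟨z,P,Q⟩; dsimp only; simp only [Prod.mk.injEq, true_and, and_true]; omega

def G3 : (ℤ×ℤ×ℤ) ≃ (ℤ×ℤ×ℤ) where
  toFun p := (p.2.2, p.1+p.2.1, p.1)
  invFun q := (q.2.2, q.2.1-q.2.2, q.1)
  left_inv := by rintro ⟨n,x,y⟩; dsimp only; simp only [Prod.mk.injEq, true_and, and_true]; omega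
  right_inv := by rintro ⟨z,P,Q⟩; dsimp only; simp only [Prod.mk.injEq, true_and, and_true]; omega

def G4 : (ℤ×ℤ×ℤ) ≃ (ℤ×ℤ×ℤ) where
  toFun p := (p.2.1, p.1+p.2.2, p.1)
  invFun q := (q.2.2, q.1, q.2.1-q.2.2)
  left_inv := by rintro ⟨n,x,y⟩; dsimp only; simp only [Prod.mk.injEq, true_and, and_true]; omega
  right_inv := by rintro ⟨z,P,Q⟩; dsimp only; simp only [Prod.mk.injEq, true_and, and_true]; omega

lemma main_core (s σ τ δ : ℝ) (hs : 0 ≤ s) (hτ : 0 ≤ τ) (hδ : 0 < δ)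
    (hsum : 2*s + 3*τ + δ = 2) (hτσ : τ + 2*σ = 0)
    (u : ℤ → ℝ≥0∞) (W : ℤ → ℝ≥0∞)
    (hWu : ∀ m, W m = ENNReal.ofReal (jap m ^ (2*σ)) * u m ^ 2) (b : Fin 4) :
    (∑' (n : ℤ) (p : Gamma n),
        ENNReal.ofReal (jap n ^ (2 * s) / |(phi p.1 n : ℝ)|)
          * u (![p.1.1, p.1.2.1, p.1.2.2, n] b) ^ 2
          * u p.1.1 * u p.1.2.1 * u p.1.2.2 * u n)
    ≤ ENNReal.ofReal 52 * (1 + 2 * ∑' m : ℤ, ENNReal.ofReal (jap m ^ (-(1+δ))))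
        * (∑' m : ℤ, W m)^3 := by
  have usq : ∀ m : ℤ, u m ^ 2 = ENNReal.ofReal (jap m ^ τ) * W m := by
    intro m
    rw [hWu m, ← mul_assoc, ← ENNReal.ofReal_mul (Real.rpow_nonneg (jap_pos m).le _),
      ← Real.rpow_add (jap_pos m), hτσ, Real.rpow_zero, ENNReal.ofReal_one, one_mul]
  -- frequency bound helpers
  have hfa : ∀ p : ℤ×ℤ×ℤ, p.2.1 ≠ 0 → p.2.2 ≠ 0 →
      (1:ℝ)+((p.1+p.2.1 : ℤ):ℝ)^2 ≤ 13*(Qz p.1 p.2.1 p.2.2:ℝ) :=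
    fun p hx _ => freq_bound hx _ (Or.inr (Or.inl rfl))
  have hfc : ∀ p : ℤ×ℤ×ℤ, p.2.1 ≠ 0 → p.2.2 ≠ 0 →
      (1:ℝ)+((p.1+p.2.2 : ℤ):ℝ)^2 ≤ 13*(Qz p.1 p.2.1 p.2.2:ℝ) :=
    fun p hx _ => freq_bound hx _ (Or.inr (Or.inr (Or.inl rfl)))
  have hfd : ∀ p : ℤ×ℤ×ℤ, p.2.1 ≠ 0 → p.2.2 ≠ 0 →
      (1:ℝ)+((p.1+p.2.1+p.2.2 : ℤ):ℝ)^2 ≤ 13*(Qz p.1 p.2.1 p.2.2:ℝ) :=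
    fun p hx _ => freq_bound hx _ (Or.inr (Or.inr (Or.inr rfl)))
  have hfn : ∀ p : ℤ×ℤ×ℤ, p.2.1 ≠ 0 → p.2.2 ≠ 0 →
      (1:ℝ)+((p.1 : ℤ):ℝ)^2 ≤ 13*(Qz p.1 p.2.1 p.2.2:ℝ) :=
    fun p hx _ => freq_bound hx _ (Or.inl rfl)
  -- combination bounds
  have hS2B : ENNReal.ofReal 13 * (2 * ∑' m : ℤ, ENNReal.ofReal (jap m ^ (-(1+δ))))
        * ((∑' m, W m) * (∑' m, W m)^2)
      ≤ ENNReal.ofReal 13 * ((1 + 2 * ∑' m : ℤ, ENNReal.ofReal (jap m ^ (-(1+δ))))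
        * (∑' m, W m)^3) := by
    calc ENNReal.ofReal 13 * (2 * ∑' m : ℤ, ENNReal.ofReal (jap m ^ (-(1+δ))))
          * ((∑' m, W m) * (∑' m, W m)^2)
        = ENNReal.ofReal 13 * ((2 * ∑' m : ℤ, ENNReal.ofReal (jap m ^ (-(1+δ))))
          * (∑' m, W m)^3) := by ring
      _ ≤ _ := mul_le_mul_right (mul_le_mul_left le_add_self _) _
  have hD2B : ENNReal.ofReal 13 * (∑' m, W m)^3
      ≤ ENNReal.ofReal 13 * ((1 + 2 * ∑' m : ℤ, ENNReal.ofReal (jap m ^ (-(1+δ))))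
        * (∑' m, W m)^3) := by
    calc ENNReal.ofReal 13 * (∑' m, W m)^3
        = ENNReal.ofReal 13 * (1 * (∑' m, W m)^3) := by ring
      _ ≤ _ := mul_le_mul_right (mul_le_mul_left le_self_add _) _
  have hsum4 : ∀ t1 t2 t3 t4 : ℝ≥0∞,
      t1 ≤ ENNReal.ofReal 13 * ((1 + 2 * ∑' m : ℤ, ENNReal.ofReal (jap m ^ (-(1+δ))))
        * (∑' m, W m)^3) →
      t2 ≤ ENNReal.ofReal 13 * ((1 + 2 * ∑' m : ℤ, ENNReal.ofReal (jap m ^ (-(1+δ))))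
        * (∑' m, W m)^3) →
      t3 ≤ ENNReal.ofReal 13 * ((1 + 2 * ∑' m : ℤ, ENNReal.ofReal (jap m ^ (-(1+δ))))
        * (∑' m, W m)^3) →
      t4 ≤ ENNReal.ofReal 13 * ((1 + 2 * ∑' m : ℤ, ENNReal.ofReal (jap m ^ (-(1+δ))))
        * (∑' m, W m)^3) →
      t1 + t2 + t3 + t4 ≤ ENNReal.ofReal 52
        * (1 + 2 * ∑' m : ℤ, ENNReal.ofReal (jap m ^ (-(1+δ)))) * (∑' m, W m)^3 := by
    intro t1 t2 t3 t4 h1 h2 h3 h4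
    have h52 : ENNReal.ofReal (52:ℝ) = 4 * ENNReal.ofReal (13:ℝ) := by
      rw [show (52:ℝ) = 4*13 by norm_num, ENNReal.ofReal_mul (by norm_num)]
      norm_num
    calc t1 + t2 + t3 + t4
        ≤ ENNReal.ofReal 13 * ((1 + 2 * ∑' m : ℤ, ENNReal.ofReal (jap m ^ (-(1+δ))))
            * (∑' m, W m)^3)
          + ENNReal.ofReal 13 * ((1 + 2 * ∑' m : ℤ, ENNReal.ofReal (jap m ^ (-(1+δ))))
            * (∑' m, W m)^3)
          + ENNReal.ofReal 13 * ((1 + 2 * ∑' m : ℤ, ENNReal.ofReal (jap m ^ (-(1+δ))))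
            * (∑' m, W m)^3)
          + ENNReal.ofReal 13 * ((1 + 2 * ∑' m : ℤ, ENNReal.ofReal (jap m ^ (-(1+δ))))
            * (∑' m, W m)^3) := add_le_add (add_le_add (add_le_add h1 h2) h3) h4
      _ = _ := by rw [h52]; ring
  -- step A : reduce to a sum over ℤ³
  have inner : ∀ n : ℤ,
      (∑' (p : Gamma n),
        ENNReal.ofReal (jap n ^ (2 * s) / |(phi p.1 n : ℝ)|)
          * u (![p.1.1, p.1.2.1, p.1.2.2, n] b) ^ 2
          * u p.1.1 * u p.1.2.1 * u p.1.2.2 * u n)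
      ≤ ∑' w : ℤ × ℤ,
        ENNReal.ofReal (jap n ^ (2 * s) / |(phi (n+w.1, n+w.1+w.2, n+w.2) n : ℝ)|)
          * u (![n+w.1, n+w.1+w.2, n+w.2, n] b) ^ 2
          * u (n+w.1) * u (n+w.1+w.2) * u (n+w.2) * u n := by
    intro n
    apply Summable.tsum_le_tsum_of_inj
      (fun p : (Gamma n : Set (ℤ×ℤ×ℤ)) => ((p.1.1 - n, p.1.2.2 - n) : ℤ×ℤ))
    · rintro ⟨⟨a1,a2,a3⟩, h1, h2, h3⟩ ⟨⟨b1,b2,b3⟩, k1, k2, k3⟩ h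
      dsimp only at h1 k1
      simp only [Prod.mk.injEq] at h
      apply Subtype.ext
      simp only [Prod.mk.injEq]
      omega
    · intro c _; exact zero_le
    · rintro ⟨⟨a1,a2,a3⟩, h1, h2, h3⟩
      apply le_of_eq
      dsimp only
      dsimp only at h1
      have e2 : n + (a1 - n) + (a3 - n) = a2 := by omega
      have e1 : n + (a1 - n) = a1 := by ring
      have e3 : n + (a3 - n) = a3 := by ring
      rw [e2, e1, e3]
    · exact ENNReal.summable
    · exact ENNReal.summable
  refine le_trans (Summable.tsum_le_tsum inner ENNReal.summable ENNReal.summable) ?_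
  have prodeq : (∑' (n : ℤ) (w : ℤ × ℤ),
        ENNReal.ofReal (jap n ^ (2 * s) / |(phi (n+w.1, n+w.1+w.2, n+w.2) n : ℝ)|)
          * u (![n+w.1, n+w.1+w.2, n+w.2, n] b) ^ 2
          * u (n+w.1) * u (n+w.1+w.2) * u (n+w.2) * u n)
      = ∑' p : ℤ×ℤ×ℤ,
        ENNReal.ofReal (jap p.1 ^ (2 * s)
            / |(phi (p.1+p.2.1, p.1+p.2.1+p.2.2, p.1+p.2.2) p.1 : ℝ)|)
          * u (![p.1+p.2.1, p.1+p.2.1+p.2.2, p.1+p.2.2, p.1] b) ^ 2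
          * u (p.1+p.2.1) * u (p.1+p.2.1+p.2.2) * u (p.1+p.2.2) * u p.1 := by
    rw [ENNReal.tsum_prod']
  rw [prodeq]
  clear inner prodeq
  fin_cases b
  -- case b = 0 : distinguished frequency a = n + x
  · simp only [Matrix.cons_val_zero]
    refine le_trans (split_bound _ u W τ usq (fun p => p.1 + p.2.1)) ?_
    apply hsum4
    · -- T1 : (a,a,d), S with G1
      refine le_trans (term_S s τ δ hs hτ hδ.le hsum W (∑' m, W m)
        (fun p => p.1+p.2.1) (fun p => p.1+p.2.1) (fun p => p.1+p.2.1+p.2.2) (fun p => p.1)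
        (fun p hx hy => ⟨hfa p hx hy, hfa p hx hy, hfd p hx hy, hfn p hx hy⟩)
        G1 (fun w => w.1) (fun _ => (0:ℤ)) ?_) hS2B
      rintro ⟨n,x,y⟩
      have hG : G1 (n,x,y) = (n, n+x, n+x+y) := rfl
      rw [hG]
      dsimp only
      rw [show n - (n+x) = -x by ring, jap_neg, sub_zero]
      calc ENNReal.ofReal (jap x ^ (-(1:ℝ))) * ENNReal.ofReal (jap y ^ (-(1:ℝ)))
            * ENNReal.ofReal (jap n ^ (-δ)) * (W (n+x) * W (n+x) * W (n+x+y))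
          = (ENNReal.ofReal (jap x ^ (-(1:ℝ))) * ENNReal.ofReal (jap n ^ (-δ))
              * (W (n+x) * W (n+x+y))) * (ENNReal.ofReal (jap y ^ (-(1:ℝ))) * W (n+x)) := by
            ring
        _ ≤ (ENNReal.ofReal (jap x ^ (-(1:ℝ))) * ENNReal.ofReal (jap n ^ (-δ))
              * (W (n+x) * W (n+x+y))) * (1 * (∑' m, W m)) :=
            mul_le_mul_right (mul_le_mul' (japE_le_one y 1 zero_le_one) (ENNReal.le_tsum _)) _
        _ = _ := by ring
    · -- T2 : (a,a,n), S with G3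
      refine le_trans (term_S s τ δ hs hτ hδ.le hsum W (∑' m, W m)
        (fun p => p.1+p.2.1) (fun p => p.1+p.2.1) (fun p => p.1) (fun p => p.1+p.2.2)
        (fun p hx hy => ⟨hfa p hx hy, hfa p hx hy, hfn p hx hy, hfc p hx hy⟩)
        G3 (fun _ => (0:ℤ)) (fun w => -w.2) ?_) hS2B
      rintro ⟨n,x,y⟩
      have hG : G3 (n,x,y) = (y, n+x, n) := rfl
      rw [hG]
      dsimp only
      rw [sub_zero, show y - -n = n+y by ring]
      calc ENNReal.ofReal (jap x ^ (-(1:ℝ))) * ENNReal.ofReal (jap y ^ (-(1:ℝ)))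
            * ENNReal.ofReal (jap (n+y) ^ (-δ)) * (W (n+x) * W (n+x) * W n)
          = (ENNReal.ofReal (jap y ^ (-(1:ℝ))) * ENNReal.ofReal (jap (n+y) ^ (-δ))
              * (W (n+x) * W n)) * (ENNReal.ofReal (jap x ^ (-(1:ℝ))) * W (n+x)) := by
            ring
        _ ≤ (ENNReal.ofReal (jap y ^ (-(1:ℝ))) * ENNReal.ofReal (jap (n+y) ^ (-δ))
              * (W (n+x) * W n)) * (1 * (∑' m, W m)) :=
            mul_le_mul_right (mul_le_mul' (japE_le_one x 1 zero_le_one) (ENNReal.le_tsum _)) _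
        _ = _ := by ring
    · -- T3 : (a,c,d), D
      refine le_trans (term_D s τ δ hs hτ hδ.le hsum W
        (fun p => p.1+p.2.1) (fun p => p.1+p.2.2) (fun p => p.1+p.2.1+p.2.2)
        (fun p hx hy => ⟨hfa p hx hy, hfc p hx hy, hfd p hx hy⟩)
        (by rintro ⟨pn,px,py⟩ ⟨qn,qx,qy⟩ h
            simp only [Prod.mk.injEq] at h ⊢
            omega)) hD2B
    · -- T4 : (a,c,n), D
      refine le_trans (term_D s τ δ hs hτ hδ.le hsum W
        (fun p => p.1+p.2.1) (fun p => p.1+p.2.2) (fun p => p.1)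
        (fun p hx hy => ⟨hfa p hx hy, hfc p hx hy, hfn p hx hy⟩)
        (by rintro ⟨pn,px,py⟩ ⟨qn,qx,qy⟩ h
            simp only [Prod.mk.injEq] at h ⊢
            omega)) hD2B
  -- case b = 1 : distinguished frequency d = n + x + y
  · simp only [Matrix.cons_val_one, Matrix.head_cons]
    refine le_trans (split_bound _ u W τ usq (fun p => p.1 + p.2.1 + p.2.2)) ?_
    apply hsum4
    · -- T1 : (d,a,d), S with G1
      refine le_trans (term_S s τ δ hs hτ hδ.le hsum W (∑' m, W m)
        (fun p => p.1+p.2.1+p.2.2) (fun p => p.1+p.2.1) (fun p => p.1+p.2.1+p.2.2)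
        (fun p => p.1)
        (fun p hx hy => ⟨hfd p hx hy, hfa p hx hy, hfd p hx hy, hfn p hx hy⟩)
        G1 (fun w => w.1) (fun _ => (0:ℤ)) ?_) hS2B
      rintro ⟨n,x,y⟩
      have hG : G1 (n,x,y) = (n, n+x, n+x+y) := rfl
      rw [hG]
      dsimp only
      rw [show n - (n+x) = -x by ring, jap_neg, sub_zero]
      calc ENNReal.ofReal (jap x ^ (-(1:ℝ))) * ENNReal.ofReal (jap y ^ (-(1:ℝ)))
            * ENNReal.ofReal (jap n ^ (-δ)) * (W (n+x+y) * W (n+x) * W (n+x+y))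
          = (ENNReal.ofReal (jap x ^ (-(1:ℝ))) * ENNReal.ofReal (jap n ^ (-δ))
              * (W (n+x) * W (n+x+y))) * (ENNReal.ofReal (jap y ^ (-(1:ℝ))) * W (n+x+y)) := by
            ring
        _ ≤ (ENNReal.ofReal (jap x ^ (-(1:ℝ))) * ENNReal.ofReal (jap n ^ (-δ))
              * (W (n+x) * W (n+x+y))) * (1 * (∑' m, W m)) :=
            mul_le_mul_right (mul_le_mul' (japE_le_one y 1 zero_le_one) (ENNReal.le_tsum _)) _
        _ = _ := by ring
    · -- T2 : (d,a,n), D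
      refine le_trans (term_D s τ δ hs hτ hδ.le hsum W
        (fun p => p.1+p.2.1+p.2.2) (fun p => p.1+p.2.1) (fun p => p.1)
        (fun p hx hy => ⟨hfd p hx hy, hfa p hx hy, hfn p hx hy⟩)
        (by rintro ⟨pn,px,py⟩ ⟨qn,qx,qy⟩ h
            simp only [Prod.mk.injEq] at h ⊢
            omega)) hD2B
    · -- T3 : (d,c,d), S with G2
      refine le_trans (term_S s τ δ hs hτ hδ.le hsum W (∑' m, W m)
        (fun p => p.1+p.2.1+p.2.2) (fun p => p.1+p.2.2) (fun p => p.1+p.2.1+p.2.2)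
        (fun p => p.1)
        (fun p hx hy => ⟨hfd p hx hy, hfc p hx hy, hfd p hx hy, hfn p hx hy⟩)
        G2 (fun w => w.1) (fun _ => (0:ℤ)) ?_) hS2B
      rintro ⟨n,x,y⟩
      have hG : G2 (n,x,y) = (n, n+y, n+x+y) := rfl
      rw [hG]
      dsimp only
      rw [show n - (n+y) = -y by ring, jap_neg, sub_zero]
      calc ENNReal.ofReal (jap x ^ (-(1:ℝ))) * ENNReal.ofReal (jap y ^ (-(1:ℝ)))
            * ENNReal.ofReal (jap n ^ (-δ)) * (W (n+x+y) * W (n+y) * W (n+x+y))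
          = (ENNReal.ofReal (jap y ^ (-(1:ℝ))) * ENNReal.ofReal (jap n ^ (-δ))
              * (W (n+y) * W (n+x+y))) * (ENNReal.ofReal (jap x ^ (-(1:ℝ))) * W (n+x+y)) := by
            ring
        _ ≤ (ENNReal.ofReal (jap y ^ (-(1:ℝ))) * ENNReal.ofReal (jap n ^ (-δ))
              * (W (n+y) * W (n+x+y))) * (1 * (∑' m, W m)) :=
            mul_le_mul_right (mul_le_mul' (japE_le_one x 1 zero_le_one) (ENNReal.le_tsum _)) _
        _ = _ := by ring
    · -- T4 : (d,c,n), D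
      refine le_trans (term_D s τ δ hs hτ hδ.le hsum W
        (fun p => p.1+p.2.1+p.2.2) (fun p => p.1+p.2.2) (fun p => p.1)
        (fun p hx hy => ⟨hfd p hx hy, hfc p hx hy, hfn p hx hy⟩)
        (by rintro ⟨pn,px,py⟩ ⟨qn,qx,qy⟩ h
            simp only [Prod.mk.injEq] at h ⊢
            omega)) hD2B
  -- case b = 2 : distinguished frequency c = n + y
  · simp only [Matrix.cons_val_two, Matrix.tail_cons, Matrix.head_cons]
    refine le_trans (split_bound _ u W τ usq (fun p => p.1 + p.2.2)) ?_
    apply hsum4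
    · -- T1 : (c,a,d), D
      refine le_trans (term_D s τ δ hs hτ hδ.le hsum W
        (fun p => p.1+p.2.2) (fun p => p.1+p.2.1) (fun p => p.1+p.2.1+p.2.2)
        (fun p hx hy => ⟨hfc p hx hy, hfa p hx hy, hfd p hx hy⟩)
        (by rintro ⟨pn,px,py⟩ ⟨qn,qx,qy⟩ h
            simp only [Prod.mk.injEq] at h ⊢
            omega)) hD2B
    · -- T2 : (c,a,n), D
      refine le_trans (term_D s τ δ hs hτ hδ.le hsum W
        (fun p => p.1+p.2.2) (fun p => p.1+p.2.1) (fun p => p.1)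
        (fun p hx hy => ⟨hfc p hx hy, hfa p hx hy, hfn p hx hy⟩)
        (by rintro ⟨pn,px,py⟩ ⟨qn,qx,qy⟩ h
            simp only [Prod.mk.injEq] at h ⊢
            omega)) hD2B
    · -- T3 : (c,c,d), S with G2
      refine le_trans (term_S s τ δ hs hτ hδ.le hsum W (∑' m, W m)
        (fun p => p.1+p.2.2) (fun p => p.1+p.2.2) (fun p => p.1+p.2.1+p.2.2)
        (fun p => p.1)
        (fun p hx hy => ⟨hfc p hx hy, hfc p hx hy, hfd p hx hy, hfn p hx hy⟩)
        G2 (fun w => w.1) (fun _ => (0:ℤ)) ?_) hS2B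
      rintro ⟨n,x,y⟩
      have hG : G2 (n,x,y) = (n, n+y, n+x+y) := rfl
      rw [hG]
      dsimp only
      rw [show n - (n+y) = -y by ring, jap_neg, sub_zero]
      calc ENNReal.ofReal (jap x ^ (-(1:ℝ))) * ENNReal.ofReal (jap y ^ (-(1:ℝ)))
            * ENNReal.ofReal (jap n ^ (-δ)) * (W (n+y) * W (n+y) * W (n+x+y))
          = (ENNReal.ofReal (jap y ^ (-(1:ℝ))) * ENNReal.ofReal (jap n ^ (-δ))
              * (W (n+y) * W (n+x+y))) * (ENNReal.ofReal (jap x ^ (-(1:ℝ))) * W (n+y)) := by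
            ring
        _ ≤ (ENNReal.ofReal (jap y ^ (-(1:ℝ))) * ENNReal.ofReal (jap n ^ (-δ))
              * (W (n+y) * W (n+x+y))) * (1 * (∑' m, W m)) :=
            mul_le_mul_right (mul_le_mul' (japE_le_one x 1 zero_le_one) (ENNReal.le_tsum _)) _
        _ = _ := by ring
    · -- T4 : (c,c,n), S with G4
      refine le_trans (term_S s τ δ hs hτ hδ.le hsum W (∑' m, W m)
        (fun p => p.1+p.2.2) (fun p => p.1+p.2.2) (fun p => p.1) (fun p => p.1+p.2.1)
        (fun p hx hy => ⟨hfc p hx hy, hfc p hx hy, hfn p hx hy, hfa p hx hy⟩)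
        G4 (fun _ => (0:ℤ)) (fun w => -w.2) ?_) hS2B
      rintro ⟨n,x,y⟩
      have hG : G4 (n,x,y) = (x, n+y, n) := rfl
      rw [hG]
      dsimp only
      rw [sub_zero, show x - -n = n+x by ring]
      calc ENNReal.ofReal (jap x ^ (-(1:ℝ))) * ENNReal.ofReal (jap y ^ (-(1:ℝ)))
            * ENNReal.ofReal (jap (n+x) ^ (-δ)) * (W (n+y) * W (n+y) * W n)
          = (ENNReal.ofReal (jap x ^ (-(1:ℝ))) * ENNReal.ofReal (jap (n+x) ^ (-δ))
              * (W (n+y) * W n)) * (ENNReal.ofReal (jap y ^ (-(1:ℝ))) * W (n+y)) := by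
            ring
        _ ≤ (ENNReal.ofReal (jap x ^ (-(1:ℝ))) * ENNReal.ofReal (jap (n+x) ^ (-δ))
              * (W (n+y) * W n)) * (1 * (∑' m, W m)) :=
            mul_le_mul_right (mul_le_mul' (japE_le_one y 1 zero_le_one) (ENNReal.le_tsum _)) _
        _ = _ := by ring
  -- case b = 3 : distinguished frequency n
  · simp only [Matrix.cons_val_three, Matrix.tail_cons, Matrix.head_cons]
    refine le_trans (split_bound _ u W τ usq (fun p => p.1)) ?_
    apply hsum4
    · -- T1 : (n,a,d), D
      refine le_trans (term_D s τ δ hs hτ hδ.le hsum W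
        (fun p => p.1) (fun p => p.1+p.2.1) (fun p => p.1+p.2.1+p.2.2)
        (fun p hx hy => ⟨hfn p hx hy, hfa p hx hy, hfd p hx hy⟩)
        (by rintro ⟨pn,px,py⟩ ⟨qn,qx,qy⟩ h
            simp only [Prod.mk.injEq] at h ⊢
            omega)) hD2B
    · -- T2 : (n,a,n), S with G3
      refine le_trans (term_S s τ δ hs hτ hδ.le hsum W (∑' m, W m)
        (fun p => p.1) (fun p => p.1+p.2.1) (fun p => p.1) (fun p => p.1+p.2.2)
        (fun p hx hy => ⟨hfn p hx hy, hfa p hx hy, hfn p hx hy, hfc p hx hy⟩)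
        G3 (fun _ => (0:ℤ)) (fun w => -w.2) ?_) hS2B
      rintro ⟨n,x,y⟩
      have hG : G3 (n,x,y) = (y, n+x, n) := rfl
      rw [hG]
      dsimp only
      rw [sub_zero, show y - -n = n+y by ring]
      calc ENNReal.ofReal (jap x ^ (-(1:ℝ))) * ENNReal.ofReal (jap y ^ (-(1:ℝ)))
            * ENNReal.ofReal (jap (n+y) ^ (-δ)) * (W n * W (n+x) * W n)
          = (ENNReal.ofReal (jap y ^ (-(1:ℝ))) * ENNReal.ofReal (jap (n+y) ^ (-δ))
              * (W (n+x) * W n)) * (ENNReal.ofReal (jap x ^ (-(1:ℝ))) * W n) := by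
            ring
        _ ≤ (ENNReal.ofReal (jap y ^ (-(1:ℝ))) * ENNReal.ofReal (jap (n+y) ^ (-δ))
              * (W (n+x) * W n)) * (1 * (∑' m, W m)) :=
            mul_le_mul_right (mul_le_mul' (japE_le_one x 1 zero_le_one) (ENNReal.le_tsum _)) _
        _ = _ := by ring
    · -- T3 : (n,c,d), D
      refine le_trans (term_D s τ δ hs hτ hδ.le hsum W
        (fun p => p.1) (fun p => p.1+p.2.2) (fun p => p.1+p.2.1+p.2.2)
        (fun p hx hy => ⟨hfn p hx hy, hfc p hx hy, hfd p hx hy⟩)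
        (by rintro ⟨pn,px,py⟩ ⟨qn,qx,qy⟩ h
            simp only [Prod.mk.injEq] at h ⊢
            omega)) hD2B
    · -- T4 : (n,c,n), S with G4
      refine le_trans (term_S s τ δ hs hτ hδ.le hsum W (∑' m, W m)
        (fun p => p.1) (fun p => p.1+p.2.2) (fun p => p.1) (fun p => p.1+p.2.1)
        (fun p hx hy => ⟨hfn p hx hy, hfc p hx hy, hfn p hx hy, hfa p hx hy⟩)
        G4 (fun _ => (0:ℤ)) (fun w => -w.2) ?_) hS2B
      rintro ⟨n,x,y⟩
      have hG : G4 (n,x,y) = (x, n+y, n) := rfl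
      rw [hG]
      dsimp only
      rw [sub_zero, show x - -n = n+x by ring]
      calc ENNReal.ofReal (jap x ^ (-(1:ℝ))) * ENNReal.ofReal (jap y ^ (-(1:ℝ)))
            * ENNReal.ofReal (jap (n+x) ^ (-δ)) * (W n * W (n+y) * W n)
          = (ENNReal.ofReal (jap x ^ (-(1:ℝ))) * ENNReal.ofReal (jap (n+x) ^ (-δ))
              * (W (n+y) * W n)) * (ENNReal.ofReal (jap y ^ (-(1:ℝ))) * W n) := by
            ring
        _ ≤ (ENNReal.ofReal (jap x ^ (-(1:ℝ))) * ENNReal.ofReal (jap (n+x) ^ (-δ))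
              * (W (n+y) * W n)) * (1 * (∑' m, W m)) :=
            mul_le_mul_right (mul_le_mul' (japE_le_one y 1 zero_le_one) (ENNReal.le_tsum _)) _
        _ = _ := by ring

/-- The resonant term bound `|R⁽²⁾(v)| ≲ ‖v‖⁶_{H^σ}`: for `1/4 < s ≤ 1/2`,
`0 < ε < (4s−1)/6` and `σ = s − 1/2 − ε`, there is `C > 0` such that for every `v`
and each of the four distinguished positions `b` (selecting one of `n₁,n₂,n₃,n`),
with all sums in `[0,∞]`,
`Σ_n Σ_{Γ(n)} (⟨n⟩^{2s}/|φ|)·|v(n_b)|²·|v(n₁)||v(n₂)||v(n₃)||v(n)| ≤ C‖v‖⁶_{H^σ}`. -/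
theorem resonant_term_sextilinear_bound (s ε σ : ℝ)
    (hs0 : 1 / 4 < s) (hs : s ≤ 1 / 2) (hε0 : 0 < ε) (hε : ε < (4 * s - 1) / 6)
    (hσ : σ = s - 1 / 2 - ε) :
    ∃ C : ℝ, 0 < C ∧ ∀ (v : ℤ → ℂ) (b : Fin 4),
      ∑' (n : ℤ) (p : Gamma n),
          ENNReal.ofReal (jap n ^ (2 * s) / |(phi p.1 n : ℝ)|)
            * (‖v (![p.1.1, p.1.2.1, p.1.2.2, n] b)‖₊ : ℝ≥0∞) ^ 2
            * (‖v p.1.1‖₊ : ℝ≥0∞) * (‖v p.1.2.1‖₊ : ℝ≥0∞)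
            * (‖v p.1.2.2‖₊ : ℝ≥0∞) * (‖v n‖₊ : ℝ≥0∞)
        ≤ ENNReal.ofReal C *
            (∑' m : ℤ, ENNReal.ofReal (jap m ^ (2 * σ)) * (‖v m‖₊ : ℝ≥0∞) ^ 2) ^ 3 := by
  have hτ0 : (0:ℝ) ≤ -(2*σ) := by rw [hσ]; linarith
  have hδ0 : (0:ℝ) < 4*s-1-6*ε := by
    have h6 : ε * 6 < 4*s-1 := (lt_div_iff₀ (by norm_num : (0:ℝ) < 6)).mp hε
    linarith
  have hsum : 2*s + 3*(-(2*σ)) + (4*s-1-6*ε) = 2 := by rw [hσ]; ring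
  have hτσ : -(2*σ) + 2*σ = 0 := by ring
  have hKne : (∑' m : ℤ, ENNReal.ofReal (jap m ^ (-(1+(4*s-1-6*ε))))) ≠ ⊤ :=
    sum_jap_ne_top (by linarith)
  set Kr : ℝ := (∑' m : ℤ, ENNReal.ofReal (jap m ^ (-(1+(4*s-1-6*ε))))).toReal with hKr
  have hKr0 : 0 ≤ Kr := ENNReal.toReal_nonneg
  refine ⟨52 * (1 + 2*Kr), by nlinarith, ?_⟩
  intro v b
  have core := main_core s σ (-(2*σ)) (4*s-1-6*ε) (by linarith) hτ0 hδ0 hsum hτσ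
    (fun m => (‖v m‖₊ : ℝ≥0∞))
    (fun m => ENNReal.ofReal (jap m ^ (2*σ)) * (‖v m‖₊ : ℝ≥0∞)^2)
    (fun m => rfl) b
  refine le_trans core ?_
  apply mul_le_mul_left
  have hKK : (∑' m : ℤ, ENNReal.ofReal (jap m ^ (-(1+(4*s-1-6*ε)))))
      = ENNReal.ofReal Kr := (ENNReal.ofReal_toReal hKne).symm
  rw [hKK]
  apply le_of_eq
  have h1 : (1:ℝ≥0∞) + 2 * ENNReal.ofReal Kr = ENNReal.ofReal (1 + 2*Kr) := by
    rw [ENNReal.ofReal_add (by norm_num) (by linarith), ENNReal.ofReal_one,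
      ENNReal.ofReal_mul (by norm_num)]
    norm_num
  rw [h1, ← ENNReal.ofReal_mul (by norm_num)]
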